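/- arXiv:1806.10586 — 5 statements merged into one kernel-verified Lean document; each statement's English description precedes it below -/
import Mathlib

section
/- For all z, z̃ ∈ ℝ^{n_0}, the generator satisfies the quantitative bijectivity bound ‖G(z) − G(z̃)‖ ≥ (1/L_σ^l) · (∏_{i=1}^l s_i) · ‖z − z̃‖. -/
/-!
STATEMENT 0 (Quantitative bijectivity of a feedforward generator).
Layers are zero-indexed: `h (i+1) = σ ∘ (W i *ᵥ h i + b i)` for `i < l`, and
`G z = h l`, with `h 0 = z`.  `s i` is the lower singular-value bound of the
`(i+1)`-st weight matrix.  The activation `σ : ℝ → ℝ` is a bijection whose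
inverse is `Lσ`-Lipschitz, expressed as `|x - y| ≤ Lσ * |σ x - σ y|`.
-/

/-- View a plain vector as an element of Euclidean space (ℓ² norm). -/
noncomputable def toE {m : ℕ} (v : Fin m → ℝ) : EuclideanSpace ℝ (Fin m) :=
  (WithLp.equiv 2 _).symm v

lemma toE_norm_le {m : ℕ} (u v : Fin m → ℝ) (c : ℝ) (hc : 0 ≤ c)
    (h : ∀ j, |u j| ≤ c * |v j|) : ‖toE u‖ ≤ c * ‖toE v‖ := by
  have h1 : ‖toE u‖ = Real.sqrt (∑ j, (u j) ^ 2) := by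
    simp [toE, EuclideanSpace.norm_eq, Real.norm_eq_abs, sq_abs]
  have h2 : ‖toE v‖ = Real.sqrt (∑ j, (v j) ^ 2) := by
    simp [toE, EuclideanSpace.norm_eq, Real.norm_eq_abs, sq_abs]
  rw [h1, h2, ← Real.sqrt_sq hc, ← Real.sqrt_mul (by positivity)]
  apply Real.sqrt_le_sqrt
  rw [Finset.mul_sum]
  apply Finset.sum_le_sum
  intro j _
  calc (u j) ^ 2 = |u j| ^ 2 := (sq_abs _).symm
    _ ≤ (c * |v j|) ^ 2 := by
        apply pow_le_pow_left₀ (abs_nonneg _) (h j)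
    _ = c ^ 2 * (v j) ^ 2 := by rw [mul_pow, sq_abs]

theorem quantitative_bijectivity
    (l : ℕ) (hl : 1 ≤ l) (n : ℕ → ℕ)
    (W : (i : ℕ) → Matrix (Fin (n (i + 1))) (Fin (n i)) ℝ)
    (b : (i : ℕ) → Fin (n (i + 1)) → ℝ)
    (σ : ℝ → ℝ) (Lσ : ℝ) (hLσ : 0 < Lσ)
    (hσbij : Function.Bijective σ)
    (hσinv : ∀ x y : ℝ, |x - y| ≤ Lσ * |σ x - σ y|)
    (s : ℕ → ℝ) (hs : ∀ i, i < l → 0 < s i)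
    (hW : ∀ i, i < l → ∀ v : EuclideanSpace ℝ (Fin (n i)),
      ‖toE ((W i).mulVec v)‖ ≥ s i * ‖v‖)
    (z zt : EuclideanSpace ℝ (Fin (n 0)))
    (h ht : (i : ℕ) → EuclideanSpace ℝ (Fin (n i)))
    (h0 : h 0 = z) (ht0 : ht 0 = zt)
    (hrec : ∀ i, i < l → h (i + 1) = toE (fun j => σ ((W i).mulVec (h i) j + b i j)))
    (htrec : ∀ i, i < l → ht (i + 1) = toE (fun j => σ ((W i).mulVec (ht i) j + b i j))) :
    ‖h l - ht l‖ ≥ (1 / Lσ ^ l) * (∏ i ∈ Finset.range l, s i) * ‖z - zt‖ := by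
  -- one-step bound
  have step : ∀ i, i < l → s i * ‖h i - ht i‖ ≤ Lσ * ‖h (i + 1) - ht (i + 1)‖ := by
    intro i hi
    have hdiff : h (i + 1) - ht (i + 1) =
        toE (fun j => σ ((W i).mulVec (h i) j + b i j)
          - σ ((W i).mulVec (ht i) j + b i j)) := by
      rw [hrec i hi, htrec i hi]; rfl
    have hmv : toE ((W i).mulVec (h i - ht i)) =
        toE (fun j => (W i).mulVec (h i) j - (W i).mulVec (ht i) j) := by
      congr 1
      funext j
      rw [Matrix.mulVec_sub]
      rfl
    calc s i * ‖h i - ht i‖ ≤ ‖toE ((W i).mulVec (h i - ht i))‖ := hW i hi _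
      _ ≤ Lσ * ‖h (i + 1) - ht (i + 1)‖ := by
          rw [hmv, hdiff]
          apply toE_norm_le _ _ _ hLσ.le
          intro j
          have := hσinv ((W i).mulVec (h i) j + b i j) ((W i).mulVec (ht i) j + b i j)
          simpa using this
  -- induction
  have key : ∀ i, i ≤ l →
      (∏ j ∈ Finset.range i, s j) * ‖z - zt‖ ≤ Lσ ^ i * ‖h i - ht i‖ := by
    intro i
    induction i with
    | zero => intro _; simp [h0, ht0]
    | succ i ih =>
      intro hil
      have hi : i < l := hil
      have h1 := ih (le_of_lt hi)
      have h2 := step i hi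
      have hLi : (0:ℝ) ≤ Lσ ^ i := (pow_pos hLσ i).le
      calc (∏ j ∈ Finset.range (i + 1), s j) * ‖z - zt‖
          = s i * ((∏ j ∈ Finset.range i, s j) * ‖z - zt‖) := by
            rw [Finset.prod_range_succ]; ring
        _ ≤ s i * (Lσ ^ i * ‖h i - ht i‖) := by
            exact mul_le_mul_of_nonneg_left h1 (hs i hi).le
        _ = Lσ ^ i * (s i * ‖h i - ht i‖) := by ring
        _ ≤ Lσ ^ i * (Lσ * ‖h (i + 1) - ht (i + 1)‖) :=
            mul_le_mul_of_nonneg_left h2 hLi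
        _ = Lσ ^ (i + 1) * ‖h (i + 1) - ht (i + 1)‖ := by ring
  have hk := key l le_rfl
  have hpos : (0:ℝ) < Lσ ^ l := pow_pos hLσ l
  rw [ge_iff_le]
  calc (1 / Lσ ^ l) * (∏ i ∈ Finset.range l, s i) * ‖z - zt‖
      = ((∏ i ∈ Finset.range l, s i) * ‖z - zt‖) / Lσ ^ l := by ring
    _ ≤ ‖h l - ht l‖ := by
        rw [div_le_iff₀ hpos]
        linarith
end

section
/- Suppose z ∈ ℝ^{n_0} and x ∈ ℝ^{n_l} satisfy ‖G(z) − x‖ ≤ ε. Define an approximate inversion sequence by ĥ_l = x and, for i = l, l−1, …, 1, let ĥ_{i−1} be any global minimizer over h ∈ ℝ^{n_{i−1}} of ‖W_i h + b_i − σ⁻¹(ĥ_i)‖, where σ⁻¹ is applied coordinatewise (assume such minimizers exist). Then for every i ∈ {0,…,l}, ‖ĥ_i − h_i(z)‖ ≤ ε · (2 L_σ)^{l−i} · ∏_{j=i+1}^{l} s_j^{−1}; in particular the recovered latent point ẑ = ĥ_0 satisfies ‖ẑ − z‖ ≤ ε · 2^l L_σ^l · ∏_{j=1}^{l} s_j^{−1}.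 -/
lemma toE_apply {m : ℕ} (v : Fin m → ℝ) (j : Fin m) : toE v j = v j := rfl

lemma lip_bound {m : ℕ} (τ : ℝ → ℝ) (Lσ : ℝ) (hLσ : 0 ≤ Lσ)
    (hτlip : ∀ x y : ℝ, |τ x - τ y| ≤ Lσ * |x - y|)
    (a b : EuclideanSpace ℝ (Fin m)) :
    ‖toE (fun j => τ (a j) - τ (b j))‖ ≤ Lσ * ‖a - b‖ := by
  rw [EuclideanSpace.norm_eq, EuclideanSpace.norm_eq]
  rw [← Real.sqrt_sq hLσ, ← Real.sqrt_mul (by positivity)]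
  apply Real.sqrt_le_sqrt
  rw [Finset.mul_sum]
  apply Finset.sum_le_sum
  intro j _
  have h1 : ‖toE (fun j => τ (a j) - τ (b j)) j‖ = |τ (a j) - τ (b j)| := rfl
  have h2 : ‖(a - b) j‖ = |a j - b j| := rfl
  rw [h1, h2]
  calc |τ (a j) - τ (b j)| ^ 2 ≤ (Lσ * |a j - b j|) ^ 2 := by
        apply pow_le_pow_left₀ (abs_nonneg _) (hτlip _ _)
    _ = Lσ ^ 2 * |a j - b j| ^ 2 := by ring

theorem approximate_inversion
    (l : ℕ) (hl : 1 ≤ l) (n : ℕ → ℕ)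
    (W : (i : ℕ) → Matrix (Fin (n (i + 1))) (Fin (n i)) ℝ)
    (b : (i : ℕ) → Fin (n (i + 1)) → ℝ)
    (σ τ : ℝ → ℝ) (Lσ : ℝ) (hLσ : 0 < Lσ)
    (hτσ : ∀ t : ℝ, τ (σ t) = t) (hστ : ∀ t : ℝ, σ (τ t) = t)
    (hτlip : ∀ x y : ℝ, |τ x - τ y| ≤ Lσ * |x - y|)
    (s : ℕ → ℝ) (hs : ∀ i, i < l → 0 < s i)
    (hW : ∀ i, i < l → ∀ v : EuclideanSpace ℝ (Fin (n i)),
      ‖toE ((W i).mulVec v)‖ ≥ s i * ‖v‖)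
    (z : EuclideanSpace ℝ (Fin (n 0)))
    (h : (i : ℕ) → EuclideanSpace ℝ (Fin (n i)))
    (h0 : h 0 = z)
    (hrec : ∀ i, i < l → h (i + 1) = toE (fun j => σ ((W i).mulVec (h i) j + b i j)))
    (x : EuclideanSpace ℝ (Fin (n l))) (ε : ℝ)
    (hx : ‖h l - x‖ ≤ ε)
    (hhat : (i : ℕ) → EuclideanSpace ℝ (Fin (n i)))
    (hhhatl : hhat l = x)
    (hmin : ∀ i, i < l → ∀ u : EuclideanSpace ℝ (Fin (n i)),
      ‖toE ((W i).mulVec (hhat i)) + toE (b i) - toE (fun j => τ (hhat (i + 1) j))‖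
        ≤ ‖toE ((W i).mulVec u) + toE (b i) - toE (fun j => τ (hhat (i + 1) j))‖) :
    (∀ i, i ≤ l →
        ‖hhat i - h i‖ ≤ ε * (2 * Lσ) ^ (l - i) * ∏ j ∈ Finset.Ico i l, (s j)⁻¹) ∧
      ‖hhat 0 - z‖ ≤ ε * 2 ^ l * Lσ ^ l * ∏ j ∈ Finset.range l, (s j)⁻¹ := by
  have hε : 0 ≤ ε := le_trans (norm_nonneg _) hx
  -- key layer step
  have step : ∀ i, i < l →
      s i * ‖hhat i - h i‖ ≤ 2 * Lσ * ‖hhat (i + 1) - h (i + 1)‖ := by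
    intro i hi
    set A := toE ((W i).mulVec (hhat i)) + toE (b i) - toE (fun j => τ (hhat (i + 1) j)) with hA
    set B := toE ((W i).mulVec (h i)) + toE (b i) - toE (fun j => τ (hhat (i + 1) j)) with hB
    have hAB : A - B = toE ((W i).mulVec (hhat i - h i)) := by
      ext j
      simp only [hA, hB, PiLp.sub_apply, PiLp.add_apply, toE_apply, Matrix.mulVec,
        dotProduct, WithLp.ofLp_sub, Pi.sub_apply, mul_sub, Finset.sum_sub_distrib]
      ring
    have hBeq : B = toE (fun j => τ (h (i + 1) j) - τ (hhat (i + 1) j)) := by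
      ext j
      have : h (i + 1) j = σ ((W i).mulVec (h i) j + b i j) := by rw [hrec i hi]; rfl
      simp only [hB, PiLp.sub_apply, PiLp.add_apply, toE_apply, this, hτσ]
    have hBnorm : ‖B‖ ≤ Lσ * ‖h (i + 1) - hhat (i + 1)‖ := by
      rw [hBeq]
      exact lip_bound τ Lσ hLσ.le hτlip _ _
    have hAnorm : ‖A‖ ≤ ‖B‖ := hmin i hi (h i)
    have h1 : s i * ‖hhat i - h i‖ ≤ ‖toE ((W i).mulVec (hhat i - h i))‖ :=
      hW i hi (hhat i - h i)
    have h2 : ‖A - B‖ ≤ 2 * ‖B‖ := by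
      calc ‖A - B‖ ≤ ‖A‖ + ‖B‖ := norm_sub_le _ _
        _ ≤ ‖B‖ + ‖B‖ := by linarith
        _ = 2 * ‖B‖ := by ring
    calc s i * ‖hhat i - h i‖ ≤ ‖A - B‖ := by rw [hAB] at h2 ⊢; exact h1
      _ ≤ 2 * ‖B‖ := h2
      _ ≤ 2 * (Lσ * ‖h (i + 1) - hhat (i + 1)‖) := by linarith
      _ = 2 * Lσ * ‖hhat (i + 1) - h (i + 1)‖ := by rw [norm_sub_rev]; ring
  have main : ∀ d, d ≤ l →
      ‖hhat (l - d) - h (l - d)‖ ≤ ε * (2 * Lσ) ^ d * ∏ j ∈ Finset.Ico (l - d) l, (s j)⁻¹ := by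
    intro d
    induction d with
    | zero =>
      intro _
      simp only [Nat.sub_zero, hhhatl, pow_zero, Finset.Ico_self, Finset.prod_empty, mul_one]
      rw [norm_sub_rev]
      exact hx
    | succ d ih =>
      intro hd
      have hd' : d ≤ l := le_of_lt hd
      have hi : l - (d + 1) < l := by omega
      have hsucc : l - (d + 1) + 1 = l - d := by omega
      set i := l - (d + 1) with hidef
      have hsi := hs i hi
      have hstep := step i hi
      rw [hsucc] at hstep
      have hih := ih hd'
      have key : ‖hhat i - h i‖ ≤ (s i)⁻¹ * (2 * Lσ * ‖hhat (l - d) - h (l - d)‖) := by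
        rw [le_inv_mul_iff₀ hsi]
        exact hstep
      have prodeq : ∏ j ∈ Finset.Ico i l, (s j)⁻¹
          = (s i)⁻¹ * ∏ j ∈ Finset.Ico (l - d) l, (s j)⁻¹ := by
        rw [← hsucc, Finset.prod_eq_prod_Ico_succ_bot hi]
      calc ‖hhat i - h i‖ ≤ (s i)⁻¹ * (2 * Lσ * ‖hhat (l - d) - h (l - d)‖) := key
        _ ≤ (s i)⁻¹ * (2 * Lσ * (ε * (2 * Lσ) ^ d * ∏ j ∈ Finset.Ico (l - d) l, (s j)⁻¹)) := by
            apply mul_le_mul_of_nonneg_left _ (inv_nonneg.mpr hsi.le)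
            apply mul_le_mul_of_nonneg_left hih (by positivity)
        _ = ε * (2 * Lσ) ^ (d + 1) * ∏ j ∈ Finset.Ico i l, (s j)⁻¹ := by
            rw [prodeq]; ring
  constructor
  · intro i hi
    have := main (l - i) (by omega)
    rwa [show l - (l - i) = i by omega] at this
  · have := main l le_rfl
    rw [Nat.sub_self] at this
    rw [h0] at this
    calc ‖hhat 0 - z‖ ≤ ε * (2 * Lσ) ^ l * ∏ j ∈ Finset.Ico 0 l, (s j)⁻¹ := this
      _ = ε * 2 ^ l * Lσ ^ l * ∏ j ∈ Finset.range l, (s j)⁻¹ := by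
          rw [mul_pow, Finset.range_eq_Ico]; ring
end

section
/- Let W be a real m×n matrix with ‖W v‖ ≥ s‖v‖ for all v ∈ ℝ^n (s > 0), b ∈ ℝ^m, and let σ : ℝ → ℝ be a bijection whose inverse is L-Lipschitz: |σ⁻¹(x) − σ⁻¹(y)| ≤ L|x − y| for all x, y. Suppose h, ĥ ∈ ℝ^m satisfy ‖ĥ − h‖ ≤ δ and h = σ(W h' + b) coordinatewise for some h' ∈ ℝ^n. If h̃ ∈ ℝ^n is a global minimizer of u ↦ ‖W u + b − σ⁻¹(ĥ)‖ (σ⁻¹ applied coordinatewise), then ‖h̃ − h'‖ ≤ 2 L δ / s. -/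
lemma lip_euclid {m : ℕ} (L : ℝ) (hL : 0 ≤ L) (f g : Fin m → ℝ)
    (hfg : ∀ j, |f j| ≤ L * |g j|) :
    ‖toE f‖ ≤ L * ‖toE g‖ := by
  rw [show (L * ‖toE g‖ : ℝ) = ‖toE (fun j => L * g j)‖ from ?_]
  · rw [EuclideanSpace.norm_eq, EuclideanSpace.norm_eq]
    apply Real.sqrt_le_sqrt
    apply Finset.sum_le_sum
    intro i _
    have := hfg i
    have h1 : |f i| ^ 2 ≤ (L * |g i|) ^ 2 := by
      apply pow_le_pow_left₀ (abs_nonneg _) this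
    simpa [toE, sq_abs, mul_pow, abs_mul, abs_of_nonneg hL] using h1
  · rw [EuclideanSpace.norm_eq, EuclideanSpace.norm_eq, ← Real.sqrt_sq hL,
      ← Real.sqrt_mul (sq_nonneg L), Finset.mul_sum]
    congr 1
    apply Finset.sum_congr rfl
    intro i _
    simp [toE, Real.sqrt_sq hL, mul_pow, abs_mul, sq_abs]
    try ring

theorem inversion_step
    (m n : ℕ) (W : Matrix (Fin m) (Fin n) ℝ) (b : Fin m → ℝ)
    (s L δ : ℝ) (hs : 0 < s) (hL : 0 < L)
    (hW : ∀ v : EuclideanSpace ℝ (Fin n), ‖toE (W.mulVec v)‖ ≥ s * ‖v‖)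
    (σ τ : ℝ → ℝ)
    (hτσ : ∀ t : ℝ, τ (σ t) = t) (hστ : ∀ t : ℝ, σ (τ t) = t)
    (hτlip : ∀ x y : ℝ, |τ x - τ y| ≤ L * |x - y|)
    (h hhat : EuclideanSpace ℝ (Fin m)) (h' : EuclideanSpace ℝ (Fin n))
    (hclose : ‖hhat - h‖ ≤ δ)
    (hlayer : h = toE (fun j => σ (W.mulVec h' j + b j)))
    (htilde : EuclideanSpace ℝ (Fin n))
    (hmin : ∀ u : EuclideanSpace ℝ (Fin n),
      ‖toE (W.mulVec htilde) + toE b - toE (fun j => τ (hhat j))‖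
        ≤ ‖toE (W.mulVec u) + toE b - toE (fun j => τ (hhat j))‖) :
    ‖htilde - h'‖ ≤ 2 * L * δ / s := by
  set c : EuclideanSpace ℝ (Fin m) := toE (fun j => τ (hhat j)) with hc
  set A : EuclideanSpace ℝ (Fin m) := toE (W.mulVec htilde) + toE b - c with hA
  set B : EuclideanSpace ℝ (Fin m) := toE (W.mulVec h') + toE b - c with hB
  -- key: B j = τ (h j) - τ (hhat j)
  have hBeq : B = toE (fun j => τ (h j) - τ (hhat j)) := by
    ext j
    have hj : h j = σ (W.mulVec h' j + b j) := by rw [hlayer]; rfl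
    simp [hB, hc, toE, hj, hτσ]
  have hBnorm : ‖B‖ ≤ L * δ := by
    rw [hBeq]
    calc ‖toE (fun j => τ (h j) - τ (hhat j))‖
        ≤ L * ‖toE (fun j => h j - hhat j)‖ := by
          apply lip_euclid L hL.le
          intro j
          exact hτlip _ _
      _ ≤ L * δ := by
          have : toE (fun j => h j - hhat j) = h - hhat := rfl
          rw [this]
          have : ‖h - hhat‖ ≤ δ := by rwa [norm_sub_rev] at hclose
          exact mul_le_mul_of_nonneg_left this hL.le
  have hAB : A - B = toE (W.mulVec (htilde - h')) := by
    ext j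
    have h1 : (A - B) j = (∑ i, W j i * htilde i) - ∑ i, W j i * h' i := by
      simp [hA, hB, toE, Matrix.mulVec, dotProduct]
      try ring
    rw [h1, ← Finset.sum_sub_distrib]
    exact Finset.sum_congr rfl fun i _ => (mul_sub _ _ _).symm
  have key : s * ‖htilde - h'‖ ≤ 2 * (L * δ) := by
    calc s * ‖htilde - h'‖ ≤ ‖toE (W.mulVec (htilde - h'))‖ := hW _
      _ = ‖A - B‖ := by rw [hAB]
      _ ≤ ‖A‖ + ‖B‖ := norm_sub_le _ _
      _ ≤ ‖B‖ + ‖B‖ := by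
          have h2 : ‖A‖ ≤ ‖B‖ := hmin h'
          linarith
      _ ≤ 2 * (L * δ) := by linarith
  rw [le_div_iff₀ hs]
  linarith [key]
end

section
/- For every z ∈ ℝ^k with R‖z − z*‖ ≥ ‖r‖, one has f(z*) − f(z) ≥ (R‖z − z*‖ − ‖r‖)²/β² − ‖r‖²/β² − ‖z − z*‖² − 2‖z − z*‖·‖z*‖. -/
/-!
STATEMENT 6 (Drop in the log-density exponent away from the maximizer).
`f z = −‖z‖² − ‖G z − x‖²/β²` with `x = G z* + r`; note
`f z* = −‖z*‖² − ‖r‖²/β²`.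
-/

theorem log_density_drop
    (k d : ℕ)
    (G : EuclideanSpace ℝ (Fin k) → EuclideanSpace ℝ (Fin d))
    (R β : ℝ) (hR : 0 < R) (hβ : 0 < β)
    (hG : ∀ z z' : EuclideanSpace ℝ (Fin k), ‖G z - G z'‖ ≥ R * ‖z - z'‖)
    (zstar : EuclideanSpace ℝ (Fin k)) (r : EuclideanSpace ℝ (Fin d))
    (x : EuclideanSpace ℝ (Fin d)) (hx : x = G zstar + r)
    (f : EuclideanSpace ℝ (Fin k) → ℝ)
    (hf : ∀ z, f z = -‖z‖ ^ 2 - ‖G z - x‖ ^ 2 / β ^ 2)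
    (z : EuclideanSpace ℝ (Fin k))
    (hfar : R * ‖z - zstar‖ ≥ ‖r‖) :
    f zstar - f z ≥ (R * ‖z - zstar‖ - ‖r‖) ^ 2 / β ^ 2 - ‖r‖ ^ 2 / β ^ 2
      - ‖z - zstar‖ ^ 2 - 2 * ‖z - zstar‖ * ‖zstar‖ := by
  subst hx
  have hA : G zstar - (G zstar + r) = -r := by abel
  have hB : G z - (G zstar + r) = (G z - G zstar) - r := by abel
  have h1 : ‖G z - (G zstar + r)‖ ≥ R * ‖z - zstar‖ - ‖r‖ := by
    rw [hB]
    calc ‖G z - G zstar - r‖ ≥ ‖G z - G zstar‖ - ‖r‖ := norm_sub_norm_le _ _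
    _ ≥ R * ‖z - zstar‖ - ‖r‖ := by linarith [hG z zstar]
  have h2 : ‖G z - (G zstar + r)‖ ^ 2 ≥ (R * ‖z - zstar‖ - ‖r‖) ^ 2 := by
    have h0 : (0:ℝ) ≤ R * ‖z - zstar‖ - ‖r‖ := by linarith
    nlinarith [norm_nonneg (G z - (G zstar + r))]
  have h3 : ‖zstar‖ ≤ ‖z‖ + ‖z - zstar‖ := by
    calc ‖zstar‖ = ‖z - (z - zstar)‖ := by congr 1; abel
    _ ≤ ‖z‖ + ‖z - zstar‖ := norm_sub_le _ _
  have h3' : ‖z‖ ≤ ‖zstar‖ + ‖z - zstar‖ := by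
    calc ‖z‖ = ‖zstar + (z - zstar)‖ := by congr 1; abel
    _ ≤ ‖zstar‖ + ‖z - zstar‖ := norm_add_le _ _
  have h4 : ‖z‖ ^ 2 ≥ ‖zstar‖ ^ 2 - ‖z - zstar‖ ^ 2 - 2 * ‖z - zstar‖ * ‖zstar‖ := by
    nlinarith [norm_nonneg z, norm_nonneg zstar, norm_nonneg (z - zstar),
      mul_le_mul_of_nonneg_left h3' (norm_nonneg (z - zstar)),
      mul_le_mul_of_nonneg_left h3 (norm_nonneg zstar)]
  have hβ2 : (0:ℝ) < β ^ 2 := by positivity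
  rw [hf zstar, hf z, hA, norm_neg]
  have h5 : (R * ‖z - zstar‖ - ‖r‖) ^ 2 / β ^ 2 ≤ ‖G z - (G zstar + r)‖ ^ 2 / β ^ 2 := by
    gcongr
  linarith
end

section
/- Suppose z ∈ ℝ^k satisfies ‖r‖ ≤ (R/4)‖z − z*‖ and ‖z − z*‖ ≥ 16 β² ‖z*‖ / R², and suppose β² ≤ R²/8. Then f(z) ≤ f(z*) − (R²/(4β²)) ‖z − z*‖². -/
/-!
STATEMENT 7 (Quantitative Gaussian-type decay of the log-density exponent).
`f z = −‖z‖² − ‖G z − x‖²/β²` with `x = G z* + r`; note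
`f z* = −‖z*‖² − ‖r‖²/β²`.
-/

theorem log_density_quadratic_decay
    (k d : ℕ)
    (G : EuclideanSpace ℝ (Fin k) → EuclideanSpace ℝ (Fin d))
    (R β : ℝ) (hR : 0 < R) (hβ : 0 < β)
    (hG : ∀ z z' : EuclideanSpace ℝ (Fin k), ‖G z - G z'‖ ≥ R * ‖z - z'‖)
    (zstar : EuclideanSpace ℝ (Fin k)) (r : EuclideanSpace ℝ (Fin d))
    (x : EuclideanSpace ℝ (Fin d)) (hx : x = G zstar + r)
    (f : EuclideanSpace ℝ (Fin k) → ℝ)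
    (hf : ∀ z, f z = -‖z‖ ^ 2 - ‖G z - x‖ ^ 2 / β ^ 2)
    (z : EuclideanSpace ℝ (Fin k))
    (hr : ‖r‖ ≤ (R / 4) * ‖z - zstar‖)
    (hzfar : ‖z - zstar‖ ≥ 16 * β ^ 2 * ‖zstar‖ / R ^ 2)
    (hβsmall : β ^ 2 ≤ R ^ 2 / 8) :
    f z ≤ f zstar - (R ^ 2 / (4 * β ^ 2)) * ‖z - zstar‖ ^ 2 := by
  set D := ‖z - zstar‖ with hD
  have hDnn : 0 ≤ D := norm_nonneg _
  have hB : (0:ℝ) < β ^ 2 := by positivity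
  have hGz : ‖G z - G zstar‖ ≥ R * D := hG z zstar
  have htri : ‖G z - G zstar‖ - ‖r‖ ≤ ‖G z - x‖ := by
    rw [hx, ← sub_sub]
    exact norm_sub_norm_le _ _
  have hlow : 3 * R / 4 * D ≤ ‖G z - x‖ := by nlinarith
  have hlownn : 0 ≤ 3 * R / 4 * D := by positivity
  have hsq : (3 * R / 4 * D) ^ 2 ≤ ‖G z - x‖ ^ 2 :=
    pow_le_pow_left₀ hlownn hlow 2
  have hzs : ‖zstar‖ - ‖z‖ ≤ D := by
    calc ‖zstar‖ - ‖z‖ ≤ ‖zstar - z‖ := norm_sub_norm_le _ _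
    _ = D := by rw [hD, norm_sub_rev]
  have hzs2 : ‖z‖ - ‖zstar‖ ≤ D := by
    calc ‖z‖ - ‖zstar‖ ≤ ‖z - zstar‖ := norm_sub_norm_le _ _
    _ = D := rfl
  have hfar : 16 * β ^ 2 * ‖zstar‖ ≤ R ^ 2 * D := by
    rw [ge_iff_le, div_le_iff₀ (by positivity)] at hzfar
    linarith
  have ha : ‖zstar‖ ^ 2 - ‖z‖ ^ 2 ≤ D * (2 * ‖zstar‖ + D) := by
    nlinarith [mul_nonneg (by linarith : (0:ℝ) ≤ D - (‖zstar‖ - ‖z‖))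
        (by positivity : (0:ℝ) ≤ ‖zstar‖ + ‖z‖),
      mul_nonneg hDnn (by linarith : (0:ℝ) ≤ ‖zstar‖ + D - ‖z‖)]
  have hb : β ^ 2 * (‖zstar‖ ^ 2 - ‖z‖ ^ 2) ≤ β ^ 2 * (D * (2 * ‖zstar‖ + D)) :=
    mul_le_mul_of_nonneg_left ha hB.le
  have hfarD : 16 * β ^ 2 * ‖zstar‖ * D ≤ R ^ 2 * D * D :=
    mul_le_mul_of_nonneg_right hfar hDnn
  have hd : β ^ 2 * D ^ 2 ≤ R ^ 2 / 8 * D ^ 2 :=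
    mul_le_mul_of_nonneg_right hβsmall (sq_nonneg D)
  have he : ‖r‖ ^ 2 ≤ (R / 4 * D) ^ 2 := pow_le_pow_left₀ (norm_nonneg r) hr 2
  have key : β ^ 2 * ‖zstar‖ ^ 2 + ‖r‖ ^ 2 + R ^ 2 / 4 * D ^ 2 ≤
      β ^ 2 * ‖z‖ ^ 2 + ‖G z - x‖ ^ 2 := by nlinarith [hb, hfarD, hd, he, hsq]
  have hGsx : ‖G zstar - x‖ = ‖r‖ := by
    rw [hx, sub_add_cancel_left, norm_neg]
  rw [hf, hf, hGsx]
  have h2 : (β ^ 2 * ‖zstar‖ ^ 2 + ‖r‖ ^ 2 + R ^ 2 / 4 * D ^ 2) / β ^ 2 ≤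
      (β ^ 2 * ‖z‖ ^ 2 + ‖G z - x‖ ^ 2) / β ^ 2 := by gcongr
  have e1 : (β ^ 2 * ‖zstar‖ ^ 2 + ‖r‖ ^ 2 + R ^ 2 / 4 * D ^ 2) / β ^ 2 =
      ‖zstar‖ ^ 2 + ‖r‖ ^ 2 / β ^ 2 + R ^ 2 / (4 * β ^ 2) * D ^ 2 := by
    field_simp
  have e2 : (β ^ 2 * ‖z‖ ^ 2 + ‖G z - x‖ ^ 2) / β ^ 2 =
      ‖z‖ ^ 2 + ‖G z - x‖ ^ 2 / β ^ 2 := by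
    field_simp
  rw [e1, e2] at h2
  linarith
end
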